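/- Let x0 ∈ ℂ^n be nonzero and, for l = 1, 2, let A_l ∈ ℂ^{n×M} satisfy A_l A_l^* = I_n, set B_l = A_l · diag(phase(A_l^* x0)) and λ2^{(l)} = sup{ ‖Im(B_l^* u)‖ : u ∈ ℂ^n, ‖u‖ = 1, Im(u^* x0) = 0 }. Define the real-linear maps S_l : ℂ^n → ℂ^n by S_l(ζ) = i · B_l · Im(B_l^* ζ), where Im(B_l^* ζ) ∈ ℝ^M is taken entrywise and regarded as a complex vector. Then for every ζ ∈ ℂ^n with Im(x0^* ζ) = 0, ‖S_2(S_1(ζ))‖ ≤ (λ2^{(1)} · λ2^{(2)})² · ‖ζ‖. -/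

import Mathlib

noncomputable def phase (z : ℂ) : ℂ := if z = 0 then 1 else z / (‖z‖ : ℂ)

lemma abs_mul_phase (z : ℂ) : (‖z‖ : ℂ) * phase z = z := by
  unfold phase
  split_ifs with h
  · simp [h]
  · have : (‖z‖ : ℂ) ≠ 0 := by simpa using (norm_ne_zero_iff.mpr h)
    field_simp

lemma conj_phase_mul (z : ℂ) : (starRingEnd ℂ) (phase z) * z = (‖z‖ : ℂ) := by
  unfold phase
  split_ifs with h
  · simp [h]
  · have hz : (‖z‖ : ℂ) ≠ 0 := by simpa using (norm_ne_zero_iff.mpr h)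
    rw [map_div₀, Complex.conj_ofReal]
    field_simp
    rw [← Complex.normSq_eq_conj_mul_self, Complex.normSq_eq_norm_sq]
    push_cast
    ring

lemma phase_mul_conj (z : ℂ) : phase z * (starRingEnd ℂ) z = (‖z‖ : ℂ) := by
  have := congrArg (starRingEnd ℂ) (conj_phase_mul z)
  simpa [map_mul, Complex.conj_ofReal] using this

lemma abs_mul_conj_phase (z : ℂ) :
    (‖z‖ : ℂ) * (starRingEnd ℂ) (phase z) = (starRingEnd ℂ) z := by
  have := congrArg (starRingEnd ℂ) (abs_mul_phase z)
  simpa [map_mul, Complex.conj_ofReal] using this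

lemma normSq_phase (z : ℂ) : Complex.normSq (phase z) = 1 := by
  rw [Complex.normSq_eq_norm_sq]
  unfold phase
  split_ifs with h
  · simp
  · rw [norm_div, Complex.norm_of_nonneg (norm_nonneg z),
      div_self (norm_ne_zero_iff.mpr h)]
    norm_num

section SAPaux

variable {n M : ℕ}

/-- `mco x0 a ζ j = Im((B^*ζ)_j)`. -/
noncomputable def mco (x0 : EuclideanSpace ℂ (Fin n)) (a : Fin M → EuclideanSpace ℂ (Fin n))
    (ζ : EuclideanSpace ℂ (Fin n)) (j : Fin M) : ℝ :=
  ((starRingEnd ℂ) (phase (inner ℂ (a j) x0 : ℂ)) * (inner ℂ (a j) ζ : ℂ)).im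

/-- the derivative map `S ζ = i B Im(B^* ζ)`. -/
noncomputable def Smap (x0 : EuclideanSpace ℂ (Fin n)) (a : Fin M → EuclideanSpace ℂ (Fin n))
    (ζ : EuclideanSpace ℂ (Fin n)) : EuclideanSpace ℂ (Fin n) :=
  ∑ j, (Complex.I * ((mco x0 a ζ j : ℂ) * phase (inner ℂ (a j) x0 : ℂ))) • a j

/-- the sup set defining `λ2`. -/
noncomputable def lamSet (x0 : EuclideanSpace ℂ (Fin n))
    (a : Fin M → EuclideanSpace ℂ (Fin n)) : Set ℝ :=
  {r : ℝ | ∃ u : EuclideanSpace ℂ (Fin n), ‖u‖ = 1 ∧ (inner ℂ u x0 : ℂ).im = 0 ∧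
    r = Real.sqrt (∑ j, (mco x0 a u j) ^ 2)}

variable (x0 : EuclideanSpace ℂ (Fin n)) (a : Fin M → EuclideanSpace ℂ (Fin n))

lemma frame_id (hiso : ∀ x : EuclideanSpace ℂ (Fin n), ∑ j, (inner ℂ (a j) x : ℂ) • a j = x)
    (u ζ : EuclideanSpace ℂ (Fin n)) :
    (inner ℂ u ζ : ℂ) = ∑ j, (starRingEnd ℂ) (inner ℂ (a j) u : ℂ) * (inner ℂ (a j) ζ : ℂ) := by
  conv_lhs => rw [← hiso ζ]
  rw [inner_sum]
  refine Finset.sum_congr rfl fun j _ => ?_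
  rw [inner_smul_right, ← inner_conj_symm u (a j)]
  ring

lemma norm_sq_frame (hiso : ∀ x : EuclideanSpace ℂ (Fin n), ∑ j, (inner ℂ (a j) x : ℂ) • a j = x)
    (ζ : EuclideanSpace ℂ (Fin n)) :
    ‖ζ‖ ^ 2 = ∑ j, Complex.normSq (inner ℂ (a j) ζ : ℂ) := by
  have h := frame_id a hiso ζ ζ
  calc ‖ζ‖ ^ 2 = (inner ℂ ζ ζ : ℂ).re := by
        rw [← inner_self_eq_norm_sq (𝕜 := ℂ), RCLike.re_to_complex]
    _ = (∑ j, (starRingEnd ℂ) (inner ℂ (a j) ζ : ℂ) * (inner ℂ (a j) ζ : ℂ)).re := by rw [h]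
    _ = ∑ j, Complex.normSq (inner ℂ (a j) ζ : ℂ) := by
        rw [Complex.re_sum]
        exact Finset.sum_congr rfl fun j _ => by
          rw [← Complex.normSq_eq_conj_mul_self, Complex.ofReal_re]

lemma mco_sq_sum_le (hiso : ∀ x : EuclideanSpace ℂ (Fin n), ∑ j, (inner ℂ (a j) x : ℂ) • a j = x)
    (ζ : EuclideanSpace ℂ (Fin n)) :
    ∑ j, (mco x0 a ζ j) ^ 2 ≤ ‖ζ‖ ^ 2 := by
  rw [norm_sq_frame a hiso ζ]
  refine Finset.sum_le_sum fun j _ => ?_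
  have h : (mco x0 a ζ j) ^ 2 ≤ Complex.normSq
      ((starRingEnd ℂ) (phase (inner ℂ (a j) x0 : ℂ)) * (inner ℂ (a j) ζ : ℂ)) := by
    rw [mco, Complex.normSq_apply]
    nlinarith [sq_nonneg (((starRingEnd ℂ) (phase (inner ℂ (a j) x0 : ℂ)) * (inner ℂ (a j) ζ : ℂ)).re)]
  rwa [Complex.normSq_mul, Complex.normSq_conj, normSq_phase, one_mul] at h

lemma re_inner_Smap (u ζ : EuclideanSpace ℂ (Fin n)) :
    (inner ℂ u (Smap x0 a ζ) : ℂ).re = ∑ j, mco x0 a ζ j * mco x0 a u j := by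
  rw [Smap, inner_sum, Complex.re_sum]
  refine Finset.sum_congr rfl fun j _ => ?_
  rw [inner_smul_right, ← inner_conj_symm u (a j)]
  simp only [mco, Complex.mul_re, Complex.mul_im, Complex.I_re, Complex.I_im,
    Complex.ofReal_re, Complex.ofReal_im, Complex.conj_re, Complex.conj_im]
  ring

lemma sum_mco_abs (hiso : ∀ x : EuclideanSpace ℂ (Fin n), ∑ j, (inner ℂ (a j) x : ℂ) • a j = x)
    (ζ : EuclideanSpace ℂ (Fin n)) :
    ∑ j, mco x0 a ζ j * ‖(inner ℂ (a j) x0 : ℂ)‖ = (inner ℂ x0 ζ : ℂ).im := by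
  rw [frame_id a hiso x0 ζ, Complex.im_sum]
  refine Finset.sum_congr rfl fun j _ => ?_
  rw [mco]
  conv_rhs => rw [← abs_mul_conj_phase (inner ℂ (a j) x0 : ℂ)]
  simp only [Complex.mul_im, Complex.mul_re, Complex.ofReal_re, Complex.ofReal_im]
  ring

lemma inner_x0_Smap (hiso : ∀ x : EuclideanSpace ℂ (Fin n), ∑ j, (inner ℂ (a j) x : ℂ) • a j = x)
    (ζ : EuclideanSpace ℂ (Fin n)) :
    (inner ℂ x0 (Smap x0 a ζ) : ℂ) = Complex.I * (((inner ℂ x0 ζ : ℂ).im : ℝ) : ℂ) := by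
  rw [Smap, inner_sum]
  have key : ∀ j ∈ (Finset.univ : Finset (Fin M)),
      (inner ℂ x0 ((Complex.I * ((mco x0 a ζ j : ℂ) * phase (inner ℂ (a j) x0 : ℂ))) • a j) : ℂ)
      = Complex.I * ((mco x0 a ζ j * ‖(inner ℂ (a j) x0 : ℂ)‖ : ℝ) : ℂ) := by
    intro j _
    rw [inner_smul_right, ← inner_conj_symm x0 (a j)]
    have h2 := phase_mul_conj (inner ℂ (a j) x0 : ℂ)
    push_cast
    linear_combination (Complex.I * (mco x0 a ζ j : ℂ)) * h2
  rw [Finset.sum_congr rfl key, ← Finset.mul_sum, ← Complex.ofReal_sum,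
    sum_mco_abs x0 a hiso ζ]

lemma lamSet_bddAbove (hiso : ∀ x : EuclideanSpace ℂ (Fin n), ∑ j, (inner ℂ (a j) x : ℂ) • a j = x) :
    BddAbove (lamSet x0 a) := by
  refine ⟨1, fun r hr => ?_⟩
  obtain ⟨u, hu, -, rfl⟩ := hr
  have h := mco_sq_sum_le x0 a hiso u
  rw [hu, one_pow] at h
  calc Real.sqrt (∑ j, mco x0 a u j ^ 2) ≤ Real.sqrt 1 := Real.sqrt_le_sqrt h
    _ = 1 := Real.sqrt_one

lemma lam_nonneg (hx0 : x0 ≠ 0)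
    (hiso : ∀ x : EuclideanSpace ℂ (Fin n), ∑ j, (inner ℂ (a j) x : ℂ) • a j = x) :
    0 ≤ sSup (lamSet x0 a) := by
  have hmem : Real.sqrt (∑ j, (mco x0 a ((↑(‖x0‖⁻¹) : ℂ) • x0) j) ^ 2) ∈ lamSet x0 a := by
    refine ⟨(↑(‖x0‖⁻¹) : ℂ) • x0, ?_, ?_, rfl⟩
    · rw [norm_smul]
      simp [norm_ne_zero_iff.2 hx0, inv_mul_cancel₀]
    · rw [inner_smul_left, Complex.conj_ofReal]
      simp only [Complex.mul_im, Complex.ofReal_re, Complex.ofReal_im]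
      have : (inner ℂ x0 x0 : ℂ).im = 0 := by
        rw [← RCLike.im_to_complex, inner_self_im]
      rw [this]
      ring
  exact (Real.sqrt_nonneg _).trans (le_csSup (lamSet_bddAbove x0 a hiso) hmem)

lemma sqrt_mco_le (hx0 : x0 ≠ 0)
    (hiso : ∀ x : EuclideanSpace ℂ (Fin n), ∑ j, (inner ℂ (a j) x : ℂ) • a j = x)
    (ζ : EuclideanSpace ℂ (Fin n)) (hζ : (inner ℂ x0 ζ : ℂ).im = 0) :
    Real.sqrt (∑ j, (mco x0 a ζ j) ^ 2) ≤ sSup (lamSet x0 a) * ‖ζ‖ := by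
  by_cases h0 : ζ = 0
  · simp [h0, mco]
  · have hr : (0:ℝ) < ‖ζ‖ := norm_pos_iff.2 h0
    have hu : ‖(↑(‖ζ‖⁻¹) : ℂ) • ζ‖ = 1 := by
      rw [norm_smul]
      simp [hr.ne', inv_mul_cancel₀]
    have him : (inner ℂ ((↑(‖ζ‖⁻¹) : ℂ) • ζ) x0 : ℂ).im = 0 := by
      rw [inner_smul_left, Complex.conj_ofReal, ← inner_conj_symm ζ x0]
      simp only [Complex.mul_im, Complex.ofReal_re, Complex.ofReal_im,
        Complex.conj_re, Complex.conj_im, hζ]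
      ring
    have hmco : ∀ j, mco x0 a ((↑(‖ζ‖⁻¹) : ℂ) • ζ) j = ‖ζ‖⁻¹ * mco x0 a ζ j := by
      intro j
      rw [mco, mco, inner_smul_right,
        show (starRingEnd ℂ) (phase (inner ℂ (a j) x0 : ℂ)) * ((↑(‖ζ‖⁻¹) : ℂ) * (inner ℂ (a j) ζ : ℂ))
          = (↑(‖ζ‖⁻¹) : ℂ) * ((starRingEnd ℂ) (phase (inner ℂ (a j) x0 : ℂ)) * (inner ℂ (a j) ζ : ℂ)) from by ring]
      simp [Complex.mul_im]
    have hmem : ‖ζ‖⁻¹ * Real.sqrt (∑ j, (mco x0 a ζ j) ^ 2) ∈ lamSet x0 a := by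
      refine ⟨(↑(‖ζ‖⁻¹) : ℂ) • ζ, hu, him, ?_⟩
      simp_rw [hmco, mul_pow, ← Finset.mul_sum]
      rw [Real.sqrt_mul (by positivity), Real.sqrt_sq (by positivity)]
    have hle := le_csSup (lamSet_bddAbove x0 a hiso) hmem
    calc Real.sqrt (∑ j, (mco x0 a ζ j) ^ 2)
        = ‖ζ‖ * (‖ζ‖⁻¹ * Real.sqrt (∑ j, (mco x0 a ζ j) ^ 2)) := by
          field_simp
      _ ≤ ‖ζ‖ * sSup (lamSet x0 a) := mul_le_mul_of_nonneg_left hle hr.le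
      _ = sSup (lamSet x0 a) * ‖ζ‖ := mul_comm _ _

lemma Smap_H (hiso : ∀ x : EuclideanSpace ℂ (Fin n), ∑ j, (inner ℂ (a j) x : ℂ) • a j = x)
    (ζ : EuclideanSpace ℂ (Fin n)) (hζ : (inner ℂ x0 ζ : ℂ).im = 0) :
    (inner ℂ x0 (Smap x0 a ζ) : ℂ).im = 0 := by
  rw [inner_x0_Smap x0 a hiso ζ, hζ]
  simp

lemma Smap_le (hx0 : x0 ≠ 0)
    (hiso : ∀ x : EuclideanSpace ℂ (Fin n), ∑ j, (inner ℂ (a j) x : ℂ) • a j = x)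
    (ζ : EuclideanSpace ℂ (Fin n)) (hζ : (inner ℂ x0 ζ : ℂ).im = 0) :
    ‖Smap x0 a ζ‖ ≤ sSup (lamSet x0 a) * Real.sqrt (∑ j, (mco x0 a ζ j) ^ 2) := by
  have hw : (inner ℂ x0 (Smap x0 a ζ) : ℂ).im = 0 := Smap_H x0 a hiso ζ hζ
  have hnorm : ‖Smap x0 a ζ‖ ^ 2 = ∑ j, mco x0 a ζ j * mco x0 a (Smap x0 a ζ) j := by
    rw [← re_inner_Smap x0 a (Smap x0 a ζ) ζ, ← inner_self_eq_norm_sq (𝕜 := ℂ),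
      RCLike.re_to_complex]
  have hcs : ∑ j, mco x0 a ζ j * mco x0 a (Smap x0 a ζ) j
      ≤ Real.sqrt (∑ j, (mco x0 a ζ j) ^ 2) *
        Real.sqrt (∑ j, (mco x0 a (Smap x0 a ζ) j) ^ 2) :=
    Real.sum_mul_le_sqrt_mul_sqrt _ _ _
  have hw2 : Real.sqrt (∑ j, (mco x0 a (Smap x0 a ζ) j) ^ 2)
      ≤ sSup (lamSet x0 a) * ‖Smap x0 a ζ‖ := sqrt_mco_le x0 a hx0 hiso _ hw
  by_cases h0 : ‖Smap x0 a ζ‖ = 0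
  · rw [h0]
    have := lam_nonneg x0 a hx0 hiso
    positivity
  · have hwpos : (0:ℝ) < ‖Smap x0 a ζ‖ := lt_of_le_of_ne (norm_nonneg _) (Ne.symm h0)
    have hs : (0:ℝ) ≤ Real.sqrt (∑ j, (mco x0 a ζ j) ^ 2) := Real.sqrt_nonneg _
    nlinarith [hnorm, hcs, hw2]

end SAPaux

/-- norm bound for the composition of the SAP block derivatives. For
`l = 1, 2`, `A_l` (with columns `a_l j`) satisfying `A_l A_l^* = I` (Parseval frame
condition), `B_l = A_l diag(phase(A_l^* x0))`,
`λ2^(l) = sup{‖Im(B_l^* u)‖ : ‖u‖ = 1, Im(u^* x0) = 0}`, and the real-linear maps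
`S_l ζ = i·B_l·Im(B_l^* ζ)`: for every `ζ` with `Im(x0^* ζ) = 0`,
`‖S_2(S_1 ζ)‖ ≤ (λ2^(1)·λ2^(2))² ‖ζ‖`. -/
theorem SAP_derivative_composition_bound {n M : ℕ}
    (x0 : EuclideanSpace ℂ (Fin n)) (hx0 : x0 ≠ 0)
    (a1 a2 : Fin M → EuclideanSpace ℂ (Fin n))
    (hiso1 : ∀ x : EuclideanSpace ℂ (Fin n), ∑ j, (inner ℂ (a1 j) x : ℂ) • a1 j = x)
    (hiso2 : ∀ x : EuclideanSpace ℂ (Fin n), ∑ j, (inner ℂ (a2 j) x : ℂ) • a2 j = x)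
    (S1 S2 : EuclideanSpace ℂ (Fin n) → EuclideanSpace ℂ (Fin n))
    (hS1 : ∀ ζ, S1 ζ = ∑ j, (Complex.I *
      ((((starRingEnd ℂ) (phase (inner ℂ (a1 j) x0 : ℂ)) * (inner ℂ (a1 j) ζ : ℂ)).im : ℂ) *
        phase (inner ℂ (a1 j) x0 : ℂ))) • a1 j)
    (hS2 : ∀ ζ, S2 ζ = ∑ j, (Complex.I *
      ((((starRingEnd ℂ) (phase (inner ℂ (a2 j) x0 : ℂ)) * (inner ℂ (a2 j) ζ : ℂ)).im : ℂ) *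
        phase (inner ℂ (a2 j) x0 : ℂ))) • a2 j)
    (lam1 lam2 : ℝ)
    (hlam1 : lam1 = sSup {r : ℝ | ∃ u : EuclideanSpace ℂ (Fin n), ‖u‖ = 1 ∧
      (inner ℂ u x0 : ℂ).im = 0 ∧
      r = Real.sqrt (∑ j, (((starRingEnd ℂ) (phase (inner ℂ (a1 j) x0 : ℂ)) *
        (inner ℂ (a1 j) u : ℂ)).im) ^ 2)})
    (hlam2 : lam2 = sSup {r : ℝ | ∃ u : EuclideanSpace ℂ (Fin n), ‖u‖ = 1 ∧
      (inner ℂ u x0 : ℂ).im = 0 ∧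
      r = Real.sqrt (∑ j, (((starRingEnd ℂ) (phase (inner ℂ (a2 j) x0 : ℂ)) *
        (inner ℂ (a2 j) u : ℂ)).im) ^ 2)}) :
    ∀ ζ : EuclideanSpace ℂ (Fin n), (inner ℂ x0 ζ : ℂ).im = 0 →
      ‖S2 (S1 ζ)‖ ≤ (lam1 * lam2) ^ 2 * ‖ζ‖ := by
  intro ζ hζ
  have e1 : ∀ ξ, S1 ξ = Smap x0 a1 ξ := fun ξ => (hS1 ξ).trans rfl
  have e2 : ∀ ξ, S2 ξ = Smap x0 a2 ξ := fun ξ => (hS2 ξ).trans rfl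
  have el1 : lam1 = sSup (lamSet x0 a1) := hlam1.trans rfl
  have el2 : lam2 = sSup (lamSet x0 a2) := hlam2.trans rfl
  rw [e1, e2, el1, el2]
  set L1 := sSup (lamSet x0 a1) with hL1
  set L2 := sSup (lamSet x0 a2) with hL2
  have hL1n : 0 ≤ L1 := lam_nonneg x0 a1 hx0 hiso1
  have hL2n : 0 ≤ L2 := lam_nonneg x0 a2 hx0 hiso2
  have hw : (inner ℂ x0 (Smap x0 a1 ζ) : ℂ).im = 0 := Smap_H x0 a1 hiso1 ζ hζ
  calc ‖Smap x0 a2 (Smap x0 a1 ζ)‖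
      ≤ L2 * Real.sqrt (∑ j, (mco x0 a2 (Smap x0 a1 ζ) j) ^ 2) :=
        Smap_le x0 a2 hx0 hiso2 _ hw
    _ ≤ L2 * (L2 * ‖Smap x0 a1 ζ‖) :=
        mul_le_mul_of_nonneg_left (sqrt_mco_le x0 a2 hx0 hiso2 _ hw) hL2n
    _ ≤ L2 * (L2 * (L1 * Real.sqrt (∑ j, (mco x0 a1 ζ j) ^ 2))) := by
        refine mul_le_mul_of_nonneg_left (mul_le_mul_of_nonneg_left ?_ hL2n) hL2n
        exact Smap_le x0 a1 hx0 hiso1 ζ hζ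
    _ ≤ L2 * (L2 * (L1 * (L1 * ‖ζ‖))) := by
        refine mul_le_mul_of_nonneg_left (mul_le_mul_of_nonneg_left
          (mul_le_mul_of_nonneg_left ?_ hL1n) hL2n) hL2n
        exact sqrt_mco_le x0 a1 hx0 hiso1 ζ hζ
    _ = (L1 * L2) ^ 2 * ‖ζ‖ := by ring
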